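/- Let T → S be a fiber bundle with fiber c(L) and radium-preserving cocycles g_{αβ}. Define T̂ as the quotient of ⨆_α U_α × L × ℝ by (u,l,t) ∼ (u, g_{αβ}(u)(l), t). Then: (1) T̂ → S, [u,l,t] ↦ u, is a well-defined fiber bundle with fiber L × ℝ and the same cocycles; (2) the map L̂ : T̂ → T, [u,l,t] ↦ α(u,[l,|t|]), is well defined, continuous, surjective, and proper; (3) the function ρ̂ : T̂ → ℝ, [u,l,t] ↦ t, is well defined and satisfies |ρ̂(x)| = ρ(L̂(x)) for all x ∈ T̂, where ρ is the tubular radium of T. -/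

import Mathlib

open Set

/-- Radii for the open cone: the interval `[0,1)`. -/
abbrev ConeRadius : Type := {r : ℝ // 0 ≤ r ∧ r < 1}

/-- The cone relation on `L × [0,1)`: identify all points with radius `0`. -/
def coneSetoid (L : Type*) : Setoid (L × ConeRadius) where
  r p q := p = q ∨ (p.2.1 = 0 ∧ q.2.1 = 0)
  iseqv := by
    constructor
    · intro p; exact Or.inl rfl
    · intro p q h
      rcases h with h | h
      · exact Or.inl h.symm
      · exact Or.inr ⟨h.2, h.1⟩
    · intro p q r h1 h2
      rcases h1 with h1 | h1 <;> rcases h2 with h2 | h2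
      · exact Or.inl (h1.trans h2)
      · exact Or.inr ⟨by rw [h1]; exact h2.1, h2.2⟩
      · exact Or.inr ⟨h1.1, by rw [← h2]; exact h1.2⟩
      · exact Or.inr ⟨h1.1, h2.2⟩

/-- The open cone `c(L) = (L × [0,1)) / ∼` with the quotient topology. -/
abbrev Cone (L : Type*) : Type _ := Quotient (coneSetoid L)

/-- The class `[l, r]` of a point of `L × [0,1)` in the cone. -/
def conePt {L : Type*} (l : L) (r : ConeRadius) : Cone L :=
  Quotient.mk (coneSetoid L) (l, r)

/-- The vertex of the cone, as a subset (a single point). -/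
def coneVertexSet (L : Type*) : Set (Cone L) :=
  {x | ∃ l : L, x = conePt l ⟨0, le_refl 0, one_pos⟩}

/-- Unbent radii: the interval `(-1, 1)`. -/
abbrev UnbRadius : Type := {t : ℝ // |t| < 1}

/-- The canonical unbending `ĉ(u, l, t) = (u, [l, |t|])` of the basic model
`M × c(L)`. -/
def hatc (M L : Type*) : M × L × UnbRadius → M × Cone L :=
  fun p => (p.1, conePt p.2.1 ⟨|p.2.2.1|, abs_nonneg _, p.2.2.2⟩)


open Set Topology

universe u v w

/-- Total space of the disjoint union `⨆ i, U i × L × (-1,1)` used to build the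
unbending of a tube. -/
abbrev UnbE {S : Type u} (L : Type v) {ι : Type w} (U : ι → Set S) :
    Type (max u v w) :=
  Σ i : ι, (↥(U i) × L × UnbRadius)

/-- The gluing relation `(u,l,t) ∼ (u, g_{ij}(u)(l), t)` on the disjoint union. -/
def unbRel {S : Type u} {L : Type v} {ι : Type w} [TopologicalSpace L]
    (U : ι → Set S) (g : ι → ι → S → L ≃ₜ L) : UnbE L U → UnbE L U → Prop :=
  fun p q =>
    (p.2.1 : S) = (q.2.1 : S) ∧ p.2.2.2 = q.2.2.2 ∧
      q.2.2.1 = g p.1 q.1 (p.2.1 : S) p.2.2.1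

/-- The unbending `T̂` of a tube: the quotient of `⨆ i, U i × L × (-1,1)` by the
radium-preserving cocycles. -/
abbrev UnbT {S : Type u} {L : Type v} {ι : Type w} [TopologicalSpace S]
    [TopologicalSpace L] (U : ι → Set S) (g : ι → ι → S → L ≃ₜ L) :
    Type (max u v w) :=
  Quot (unbRel U g)


section UnbendingHelpers

/-- Folding the unbent radius onto the cone radius. -/
def unbAbs : UnbRadius → ConeRadius := fun t => ⟨|t.1|, abs_nonneg _, t.2⟩

lemma unbAbs_continuous : Continuous unbAbs :=
  Continuous.subtype_mk (continuous_abs.comp continuous_subtype_val) _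

lemma unbAbs_proper : IsProperMap unbAbs := by
  rw [isProperMap_iff_ultrafilter]
  refine ⟨unbAbs_continuous, ?_⟩
  intro 𝒰 r h
  have hval : Filter.Tendsto (fun t : UnbRadius => |t.1|) ↑𝒰 (nhds r.1) :=
    (continuous_subtype_val.tendsto r).comp h
  by_cases hs : {t : UnbRadius | 0 ≤ t.1} ∈ 𝒰
  · have hv : Filter.Tendsto (fun t : UnbRadius => t.1) ↑𝒰 (nhds r.1) := by
      refine hval.congr' ?_
      filter_upwards [hs] with t ht
      exact abs_of_nonneg ht
    refine ⟨⟨r.1, by rw [abs_of_nonneg r.2.1]; exact r.2.2⟩,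
      Subtype.ext (abs_of_nonneg r.2.1), ?_⟩
    rw [nhds_subtype_eq_comap, ← Filter.map_le_iff_le_comap]
    exact hv
  · have hs' : {t : UnbRadius | t.1 ≤ 0} ∈ 𝒰 := by
      have h2 := (Ultrafilter.compl_mem_iff_notMem).2 hs
      filter_upwards [h2] with t ht
      exact le_of_not_ge ht
    have hv : Filter.Tendsto (fun t : UnbRadius => t.1) ↑𝒰 (nhds (-r.1)) := by
      have h3 : Filter.Tendsto (fun t : UnbRadius => -|t.1|) ↑𝒰 (nhds (-r.1)) := hval.neg
      refine h3.congr' ?_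
      filter_upwards [hs'] with t ht
      rw [abs_of_nonpos ht, neg_neg]
    refine ⟨⟨-r.1, by rw [abs_neg, abs_of_nonneg r.2.1]; exact r.2.2⟩,
      Subtype.ext (by simp [unbAbs, abs_of_nonneg r.2.1]), ?_⟩
    rw [nhds_subtype_eq_comap, ← Filter.map_le_iff_le_comap]
    exact hv

lemma coneMk_proper (L : Type*) [TopologicalSpace L] [CompactSpace L] :
    IsProperMap (Quotient.mk (coneSetoid L)) := by
  rw [isProperMap_iff_isClosedMap_and_compact_fibers]
  refine ⟨continuous_quot_mk, ?_, ?_⟩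
  · intro C hC
    have hq : IsQuotientMap (Quotient.mk (coneSetoid L)) := isQuotientMap_quot_mk
    rw [← hq.isClosed_preimage]
    by_cases h0 : ∃ p ∈ C, p.2.1 = 0
    · have hst : Quotient.mk (coneSetoid L) ⁻¹' (Quotient.mk (coneSetoid L) '' C)
          = C ∪ {p : L × ConeRadius | p.2.1 = 0} := by
        ext p
        simp only [Set.mem_preimage, Set.mem_image, Set.mem_union, Set.mem_setOf_eq]
        constructor
        · rintro ⟨c, hcC, hc⟩
          rcases Quotient.exact hc with rfl | hcp
          · exact Or.inl hcC
          · exact Or.inr hcp.2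
        · rintro (hp | hp)
          · exact ⟨p, hp, rfl⟩
          · obtain ⟨c, hcC, hc0⟩ := h0
            exact ⟨c, hcC, Quotient.sound (Or.inr ⟨hc0, hp⟩)⟩
      rw [hst]
      refine hC.union ?_
      have : {p : L × ConeRadius | p.2.1 = 0}
          = (fun p : L × ConeRadius => p.2.1) ⁻¹' {0} := rfl
      rw [this]
      exact IsClosed.preimage (continuous_subtype_val.comp continuous_snd) isClosed_singleton
    · have hst : Quotient.mk (coneSetoid L) ⁻¹' (Quotient.mk (coneSetoid L) '' C) = C := by
        ext p
        simp only [Set.mem_preimage, Set.mem_image]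
        constructor
        · rintro ⟨c, hcC, hc⟩
          rcases Quotient.exact hc with rfl | hcp
          · exact hcC
          · exact absurd ⟨c, hcC, hcp.1⟩ h0
        · intro hp
          exact ⟨p, hp, rfl⟩
      rw [hst]
      exact hC
  · intro y
    obtain ⟨p, rfl⟩ := Quot.exists_rep y
    by_cases h0 : p.2.1 = 0
    · have hst : Quotient.mk (coneSetoid L) ⁻¹' {Quot.mk _ p}
          = Set.univ ×ˢ {(⟨0, le_refl 0, one_pos⟩ : ConeRadius)} := by
        ext q
        simp only [Set.mem_preimage, Set.mem_singleton_iff, Set.mem_prod, Set.mem_univ, true_and]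
        constructor
        · intro hq
          rcases Quotient.exact hq with rfl | hqp
          · exact Subtype.ext h0
          · exact Subtype.ext hqp.1
        · intro hq
          have : q.2.1 = 0 := by rw [hq]
          exact Quotient.sound (Or.inr ⟨this, h0⟩)
      rw [show (Quot.mk (coneSetoid L).r p : Cone L) = Quotient.mk (coneSetoid L) p from rfl] at hst ⊢
      exact (congrArg IsCompact hst).mpr (isCompact_univ.prod isCompact_singleton)
    · have hst : Quotient.mk (coneSetoid L) ⁻¹' {Quot.mk _ p} = {p} := by
        ext q
        simp only [Set.mem_preimage, Set.mem_singleton_iff]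
        constructor
        · intro hq
          rcases Quotient.exact hq with rfl | hqp
          · rfl
          · exact absurd hqp.2 h0
        · rintro rfl
          rfl
      rw [show (Quot.mk (coneSetoid L).r p : Cone L) = Quotient.mk (coneSetoid L) p from rfl] at hst ⊢
      exact (congrArg IsCompact hst).mpr isCompact_singleton

lemma hatcone_proper (L : Type*) [TopologicalSpace L] [CompactSpace L] :
    IsProperMap (fun p : L × UnbRadius => conePt p.1 (unbAbs p.2)) :=
  (coneMk_proper L).comp (isProperMap_id.prodMap unbAbs_proper)

end UnbendingHelpers

/-- Let `τ : T → S` be a fiber bundle with fiber `c(L)` and radium-preserving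
cocycles `g_{ij}`, and let `T̂ = (⨆ i, U i × L × ℝ)/∼` with `(u,l,t) ∼
(u, g_{ij}(u)(l), t)`.  Then (1) `[u,l,t] ↦ u` is a well-defined fiber bundle
`T̂ → S` with fiber `L × ℝ` and the same cocycles; (2) `L̂ : T̂ → T`,
`[u,l,t] ↦ a i (u,[l,|t|])`, is well defined, continuous, surjective and proper;
(3) `ρ̂ : T̂ → ℝ`, `[u,l,t] ↦ t`, is well defined and satisfies
`|ρ̂(x)| = ρ(L̂(x))` for the tubular radium `ρ` of `T`. -/


theorem unbending_of_tube
    {S T L : Type*} [TopologicalSpace S] [TopologicalSpace T]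
    [TopologicalSpace L] [CompactSpace L] [Nonempty L]
    (τ : T → S) (hτcont : Continuous τ)
    {ι : Type*} (U : ι → Set S)
    (hUopen : ∀ i, IsOpen (U i))
    (hUcover : ∀ u : S, ∃ i, u ∈ U i)
    (a : ι → S → Cone L → T)
    (hτa : ∀ i, ∀ u ∈ U i, ∀ x : Cone L, τ (a i u x) = u)
    (hcharts : ∀ i, IsOpenEmbedding (fun p : ↥(U i) × Cone L => a i p.1.1 p.2))
    (hrange : ∀ i, Set.range (fun p : ↥(U i) × Cone L => a i p.1.1 p.2) = τ ⁻¹' (U i))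
    (g : ι → ι → S → L ≃ₜ L)
    (hgcont : ∀ i j, Continuous fun p : S × L => g i j p.1 p.2)
    (hgid : ∀ i, ∀ u ∈ U i, g i i u = Homeomorph.refl L)
    (hgcomp : ∀ i j k, ∀ u ∈ U i ∩ U j ∩ U k, ∀ l : L,
      g j k u (g i j u l) = g i k u l)
    (hcocycle : ∀ i j, ∀ u ∈ U i ∩ U j, ∀ (l : L) (r : ConeRadius),
      a i u (conePt l r) = a j u (conePt (g i j u l) r)) :
    ∃ (hatτ : UnbT U g → S) (hatL : UnbT U g → T) (hatρ : UnbT U g → ℝ),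
      -- (1) the projection is well defined, continuous, and locally trivial with
      -- fiber `L × ℝ` and the same cocycles:
      (∀ (i : ι) (u : ↥(U i)) (l : L) (t : UnbRadius),
          hatτ (Quot.mk (unbRel U g) ⟨i, (u, l, t)⟩) = (u : S)) ∧
      Continuous hatτ ∧
      (∀ i : ι, IsOpenEmbedding
        (fun p : ↥(U i) × L × UnbRadius => Quot.mk (unbRel U g) ⟨i, p⟩)) ∧
      (∀ i : ι, Set.range
        (fun p : ↥(U i) × L × UnbRadius => Quot.mk (unbRel U g) ⟨i, p⟩) =
          hatτ ⁻¹' (U i)) ∧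
      (∀ (i j : ι) (u : ↥(U i)) (u' : ↥(U j)) (l : L) (t : UnbRadius),
        (u : S) = (u' : S) →
          Quot.mk (unbRel U g) ⟨i, (u, l, t)⟩ =
            Quot.mk (unbRel U g) ⟨j, (u', g i j (u : S) l, t)⟩) ∧
      -- (2) `L̂` is well defined, continuous, surjective and proper:
      (∀ (i : ι) (u : ↥(U i)) (l : L) (t : UnbRadius),
          hatL (Quot.mk (unbRel U g) ⟨i, (u, l, t)⟩) =
            a i (u : S) (conePt l ⟨|t.1|, abs_nonneg _, t.2⟩)) ∧
      Continuous hatL ∧ Function.Surjective hatL ∧ IsProperMap hatL ∧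
      -- (3) `ρ̂` is well defined and unbends the tubular radium:
      (∀ (i : ι) (u : ↥(U i)) (l : L) (t : UnbRadius),
          hatρ (Quot.mk (unbRel U g) ⟨i, (u, l, t)⟩) = t.1) ∧
      (∀ ρ : T → ℝ,
        (∀ i, ∀ u ∈ U i, ∀ (l : L) (r : ConeRadius),
          ρ (a i u (conePt l r)) = r.1) →
        ∀ x : UnbT U g, |hatρ x| = ρ (hatL x)) := by
  classical
  -- the gluing relation is an equivalence
  have hequiv : Equivalence (unbRel U g) := by
    constructor
    · rintro ⟨i, u, l, t⟩
      refine ⟨rfl, rfl, ?_⟩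
      rw [hgid i u u.2]
      rfl
    · rintro ⟨i, u, l, t⟩ ⟨j, v, m, s⟩ ⟨hu, ht, hl⟩
      refine ⟨hu.symm, ht.symm, ?_⟩
      have hvj : (u : S) ∈ U j := by rw [hu]; exact v.2
      simp only at hl ⊢
      rw [hl, ← hu, hgcomp i j i (u : S) ⟨⟨u.2, hvj⟩, u.2⟩ l, hgid i u u.2]
      rfl
    · rintro ⟨i, u, l, t⟩ ⟨j, v, m, s⟩ ⟨k, w, n, r⟩ ⟨hu1, ht1, hl1⟩ ⟨hu2, ht2, hl2⟩
      refine ⟨hu1.trans hu2, ht1.trans ht2, ?_⟩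
      have hvj : (u : S) ∈ U j := by rw [hu1]; exact v.2
      have hwk : (u : S) ∈ U k := by rw [hu1, hu2]; exact w.2
      simp only at hl1 hl2 ⊢
      rw [hl2, hl1, ← hu1]
      exact hgcomp i j k (u : S) ⟨⟨u.2, hvj⟩, hwk⟩ l
  have hmkeq : ∀ p q : UnbE L U,
      Quot.mk (unbRel U g) p = Quot.mk (unbRel U g) q ↔ unbRel U g p q :=
    fun p q => Quot.eq.trans hequiv.eqvGen_iff
  -- well-definedness of the unbent chart map
  have hLwd : ∀ p q : UnbE L U, unbRel U g p q →
      a p.1 (p.2.1 : S) (conePt p.2.2.1 (unbAbs p.2.2.2))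
        = a q.1 (q.2.1 : S) (conePt q.2.2.1 (unbAbs q.2.2.2)) := by
    rintro ⟨i, u, l, t⟩ ⟨j, v, m, s⟩ ⟨hu, ht, hl⟩
    simp only at hu ht hl ⊢
    have hvj : (u : S) ∈ U j := by rw [hu]; exact v.2
    rw [hl, ← ht, ← hu]
    exact hcocycle i j (u : S) ⟨u.2, hvj⟩ l (unbAbs t)
  set hatτ : UnbT U g → S :=
    Quot.lift (fun p : UnbE L U => (p.2.1 : S)) (fun p q h => h.1) with hτdef
  set hatL : UnbT U g → T :=
    Quot.lift (fun p : UnbE L U => a p.1 (p.2.1 : S) (conePt p.2.2.1 (unbAbs p.2.2.2)))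
      hLwd with hLdef
  set hatρ : UnbT U g → ℝ :=
    Quot.lift (fun p : UnbE L U => p.2.2.2.1)
      (fun p q h => congrArg Subtype.val h.2.1) with hρdef
  set e : ∀ i, ↥(U i) × L × UnbRadius → UnbT U g :=
    fun i p => Quot.mk (unbRel U g) ⟨i, p⟩ with hedef
  -- injectivity of the charts into the quotient
  have hinjE : ∀ i, Function.Injective (e i) := by
    intro i p q h
    obtain ⟨hu, ht, hl⟩ := (hmkeq _ _).1 h
    simp only at hu ht hl
    rw [hgid i _ p.1.2] at hl
    exact Prod.ext (Subtype.ext hu) (Prod.ext hl.symm ht)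
  -- the charts into the quotient are open maps
  have hopenE : ∀ i, IsOpenMap (e i) := by
    intro i V hV
    have hq : IsQuotientMap (Quot.mk (unbRel U g)) := isQuotientMap_quot_mk
    rw [← hq.isOpen_preimage, isOpen_sigma_iff]
    intro j
    have hΦ : IsOpenMap (fun p : ↥(U i) × L × UnbRadius => ((p.1 : S), p.2)) :=
      ((hUopen i).isOpenEmbedding_subtypeVal.isOpenMap).prodMap IsOpenMap.id
    have hΨ : Continuous (fun q : ↥(U j) × L × UnbRadius =>
        (((q.1 : S), g j i (q.1 : S) q.2.1, q.2.2) : S × L × UnbRadius)) := by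
      refine (continuous_subtype_val.comp continuous_fst).prodMk (Continuous.prodMk ?_
        (continuous_snd.comp continuous_snd))
      exact (hgcont j i).comp ((continuous_subtype_val.comp continuous_fst).prodMk
        (continuous_fst.comp continuous_snd))
    have hset : Sigma.mk j ⁻¹' (Quot.mk (unbRel U g) ⁻¹' (e i '' V)) =
        (fun q : ↥(U j) × L × UnbRadius =>
          (((q.1 : S), g j i (q.1 : S) q.2.1, q.2.2) : S × L × UnbRadius)) ⁻¹'
          ((fun p : ↥(U i) × L × UnbRadius => ((p.1 : S), p.2)) '' V) := by
      ext q
      simp only [Set.mem_preimage, Set.mem_image]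
      constructor
      · rintro ⟨p, hpV, hpq⟩
        obtain ⟨hu, ht, hl⟩ := hequiv.symm ((hmkeq _ _).1 hpq)
        simp only at hu ht hl
        exact ⟨p, hpV, Prod.ext hu.symm (Prod.ext hl ht.symm)⟩
      · rintro ⟨p, hpV, hpq⟩
        have h1 : (p.1 : S) = (q.1 : S) := congrArg Prod.fst hpq
        have h2 : p.2.1 = g j i (q.1 : S) q.2.1 := congrArg (fun x : S × L × UnbRadius => x.2.1) hpq
        have h3 : p.2.2 = q.2.2 := congrArg (fun x : S × L × UnbRadius => x.2.2) hpq
        exact ⟨p, hpV, (hmkeq _ _).2 (hequiv.symm ⟨h1.symm, h3.symm, h2⟩)⟩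
    rw [hset]
    exact hΨ.isOpen_preimage _ (hΦ V hV)
  have hOE : ∀ i, IsOpenEmbedding (e i) := fun i =>
    IsOpenEmbedding.of_continuous_injective_isOpenMap
      (continuous_quot_mk.comp continuous_sigmaMk) (hinjE i) (hopenE i)
  -- range of each chart is the preimage of its base open set
  have hrangeτ : ∀ i, Set.range (e i) = hatτ ⁻¹' (U i) := by
    intro i
    ext x
    constructor
    · rintro ⟨p, rfl⟩
      exact p.1.2
    · obtain ⟨⟨j, q⟩, rfl⟩ := Quot.exists_rep x
      intro hx
      refine ⟨(⟨(q.1 : S), hx⟩, g j i (q.1 : S) q.2.1, q.2.2), ?_⟩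
      exact ((hmkeq ⟨j, q⟩
        ⟨i, (⟨(q.1 : S), hx⟩, g j i (q.1 : S) q.2.1, q.2.2)⟩).2 ⟨rfl, rfl, rfl⟩).symm
  -- continuity of hatL
  have hconeC : Continuous (fun q : L × UnbRadius => conePt q.1 (unbAbs q.2)) :=
    continuous_quot_mk.comp (continuous_fst.prodMk (unbAbs_continuous.comp continuous_snd))
  have hcontL : Continuous hatL := by
    refine continuous_quot_lift _ (continuous_sigma fun i => ?_)
    exact (hcharts i).continuous.comp
      (continuous_fst.prodMk (hconeC.comp continuous_snd))
  refine ⟨hatτ, hatL, hatρ, fun i u l t => rfl, ?_, hOE, hrangeτ,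
    fun i j u u' l t h => (hmkeq _ _).2 ⟨h, rfl, rfl⟩,
    fun i u l t => rfl, hcontL, ?_, ?_, fun i u l t => rfl, ?_⟩
  · -- continuity of hatτ
    exact continuous_quot_lift _
      (continuous_sigma fun i => continuous_subtype_val.comp continuous_fst)
  · -- surjectivity of hatL
    intro x
    obtain ⟨i, hi⟩ := hUcover (τ x)
    have hx : x ∈ Set.range (fun p : ↥(U i) × Cone L => a i (p.1 : S) p.2) := by
      rw [hrange i]; exact hi
    obtain ⟨⟨u₀, c⟩, hc⟩ := hx
    obtain ⟨⟨l, r⟩, rfl⟩ := Quot.exists_rep c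
    have ht1 : |r.1| < 1 := by rw [abs_of_nonneg r.2.1]; exact r.2.2
    refine ⟨Quot.mk _ ⟨i, (u₀, l, ⟨r.1, ht1⟩)⟩, ?_⟩
    show a i (u₀ : S) (conePt l (unbAbs ⟨r.1, ht1⟩)) = x
    have hr : unbAbs ⟨r.1, ht1⟩ = r := Subtype.ext (abs_of_nonneg r.2.1)
    rw [hr]
    exact hc
  · -- properness of hatL
    rw [isProperMap_iff_ultrafilter]
    refine ⟨hcontL, ?_⟩
    intro 𝒰 y hy
    obtain ⟨i, hi⟩ := hUcover (τ y)
    have hτL : ∀ x, τ (hatL x) = hatτ x := by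
      intro x
      obtain ⟨⟨j, u, l, t⟩, rfl⟩ := Quot.exists_rep x
      exact hτa j (u : S) u.2 _
    have htt : Filter.Tendsto hatτ ↑𝒰 (nhds (τ y)) := by
      have h1 := (hτcont.tendsto y).comp hy
      rwa [show τ ∘ hatL = hatτ from funext hτL] at h1
    have hmem : Set.range (e i) ∈ 𝒰 := by
      rw [hrangeτ i]
      exact htt ((hUopen i).mem_nhds hi)
    have hmapV : Filter.map (e i) ↑(𝒰.comap (hinjE i) hmem) = ↑𝒰 := by
      rw [Ultrafilter.coe_comap]
      exact Filter.map_comap_of_mem hmem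
    set 𝒱 := 𝒰.comap (hinjE i) hmem with h𝒱
    have hy' : y ∈ Set.range (fun p : ↥(U i) × Cone L => a i (p.1 : S) p.2) := by
      rw [hrange i]; exact hi
    obtain ⟨⟨u₀, c⟩, hyc⟩ := hy'
    have hTL : Filter.Tendsto (fun p : ↥(U i) × L × UnbRadius =>
        a i (p.1 : S) (conePt p.2.1 (unbAbs p.2.2))) ↑𝒱 (nhds y) := by
      have h2 : Filter.Tendsto hatL (Filter.map (e i) ↑𝒱) (nhds y) := by
        rw [hmapV]; exact hy
      rw [Filter.tendsto_map'_iff] at h2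
      exact h2
    have hF : Filter.Tendsto (fun p : ↥(U i) × L × UnbRadius =>
        ((p.1, conePt p.2.1 (unbAbs p.2.2)) : ↥(U i) × Cone L)) ↑𝒱 (nhds (u₀, c)) := by
      rw [(hcharts i).toIsEmbedding.toIsInducing.nhds_eq_comap, Filter.tendsto_comap_iff]
      show Filter.Tendsto (fun p : ↥(U i) × L × UnbRadius =>
        a i (p.1 : S) (conePt p.2.1 (unbAbs p.2.2))) ↑𝒱 (nhds (a i (u₀ : S) c))
      rw [show a i (u₀ : S) c = y from hyc]
      exact hTL
    have hfst : Filter.Tendsto (fun p : ↥(U i) × L × UnbRadius => p.1) ↑𝒱 (nhds u₀) :=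
      (continuous_fst.tendsto _).comp hF
    have hsndW : Filter.Tendsto (fun q : L × UnbRadius => conePt q.1 (unbAbs q.2))
        ↑(𝒱.map (fun p : ↥(U i) × L × UnbRadius => p.2)) (nhds c) := by
      rw [Ultrafilter.coe_map, Filter.tendsto_map'_iff]
      exact (continuous_snd.tendsto _).comp hF
    obtain ⟨⟨l₀, t₀⟩, hct, hconv⟩ :=
      (hatcone_proper L).ultrafilter_le_nhds_of_tendsto hsndW
    rw [Ultrafilter.coe_map] at hconv
    have hsnd : Filter.Tendsto (fun p : ↥(U i) × L × UnbRadius => p.2) ↑𝒱 (nhds (l₀, t₀)) :=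
      hconv
    refine ⟨e i (u₀, l₀, t₀), ?_, ?_⟩
    · show a i (u₀ : S) (conePt l₀ (unbAbs t₀)) = y
      rw [show conePt l₀ (unbAbs t₀) = c from hct]
      exact hyc
    · have hVle : (↑𝒱 : Filter _) ≤ nhds (u₀, l₀, t₀) := by
        have h4 : Filter.Tendsto (fun p : ↥(U i) × L × UnbRadius => (p.1, p.2)) ↑𝒱
            (nhds (u₀, (l₀, t₀))) := hfst.prodMk_nhds hsnd
        have h5 : Filter.Tendsto id (↑𝒱 : Filter (↥(U i) × L × UnbRadius))
            (nhds (u₀, l₀, t₀)) := h4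
        rwa [Filter.tendsto_id'] at h5
      rw [← hmapV]
      calc Filter.map (e i) ↑𝒱 ≤ Filter.map (e i) (nhds (u₀, l₀, t₀)) :=
            Filter.map_mono hVle
        _ = nhds (e i (u₀, l₀, t₀)) := (hOE i).map_nhds_eq _
  · -- the unbent radium
    intro ρ hρ x
    obtain ⟨⟨i, u, l, t⟩, rfl⟩ := Quot.exists_rep x
    show |t.1| = ρ (a i (u : S) (conePt l (unbAbs t)))
    rw [hρ i (u : S) u.2 l (unbAbs t)]
    rfl
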